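/- For any bounded operator X on a complex Hilbert space, w(X) ≤ (1/2)(‖X‖ + w(X̃)), where X̃ = |X|^{1/2} V |X|^{1/2} is the Aluthge transform of X (X = V|X| the polar decomposition). -/

import Mathlib

set_option synthInstance.maxHeartbeats 1000000
set_option maxHeartbeats 1000000

open scoped InnerProductSpace

/-- Numerical radius of a bounded operator on a complex Hilbert space. -/
noncomputable def numRad {H : Type*} [NormedAddCommGroup H] [InnerProductSpace ℂ H]
    (T : H →L[ℂ] H) : ℝ :=
  ⨆ z : {z : H // ‖z‖ = 1}, ‖(⟪T z.1, z.1⟫_ℂ : ℂ)‖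

/-- Crawford number. -/
noncomputable def crawford {H : Type*} [NormedAddCommGroup H] [InnerProductSpace ℂ H]
    (T : H →L[ℂ] H) : ℝ :=
  ⨅ z : {z : H // ‖z‖ = 1}, ‖(⟪T z.1, z.1⟫_ℂ : ℂ)‖

/-- The 2×2 block operator matrix `[[A, B], [C, D]]` acting on `H ⊕ H`
(the ℓ² direct sum `WithLp 2 (H × H)`), sending `(x, y)` to `(Ax + By, Cx + Dy)`. -/
noncomputable def blk {H : Type*} [NormedAddCommGroup H] [InnerProductSpace ℂ H]
    (A B C D : H →L[ℂ] H) : WithLp 2 (H × H) →L[ℂ] WithLp 2 (H × H) :=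
  (((WithLp.prodContinuousLinearEquiv 2 ℂ H H).symm.toContinuousLinearMap).comp
    (((A.comp (ContinuousLinearMap.fst ℂ H H) + B.comp (ContinuousLinearMap.snd ℂ H H)).prod
      (C.comp (ContinuousLinearMap.fst ℂ H H) + D.comp (ContinuousLinearMap.snd ℂ H H))))).comp
    ((WithLp.prodContinuousLinearEquiv 2 ℂ H H).toContinuousLinearMap)

section Aux

variable {H : Type*} [NormedAddCommGroup H] [InnerProductSpace ℂ H]

lemma numRad_nonneg (T : H →L[ℂ] H) : 0 ≤ numRad T :=
  Real.iSup_nonneg fun _ => norm_nonneg _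

lemma inner_le_numRad (T : H →L[ℂ] H) {z : H} (hz : ‖z‖ = 1) :
    ‖(⟪T z, z⟫_ℂ : ℂ)‖ ≤ numRad T := by
  have hbdd : BddAbove (Set.range fun w : {w : H // ‖w‖ = 1} => ‖(⟪T w.1, w.1⟫_ℂ : ℂ)‖) := by
    refine ⟨‖T‖, ?_⟩
    rintro r ⟨w, rfl⟩
    calc ‖(⟪T w.1, w.1⟫_ℂ : ℂ)‖ ≤ ‖T w.1‖ * ‖w.1‖ := norm_inner_le_norm _ _
      _ ≤ (‖T‖ * ‖w.1‖) * ‖w.1‖ := by gcongr; exact T.le_opNorm _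
      _ = ‖T‖ := by rw [w.2]; ring
  exact le_ciSup hbdd ⟨z, hz⟩

variable [CompleteSpace H]

/-- For a self-adjoint operator, the operator norm is bounded by any bound on the
numerical range. -/
lemma selfadj_norm_le {S : H →L[ℂ] H} (hS : IsSelfAdjoint S) {M : ℝ} (hM : 0 ≤ M)
    (h : ∀ x : H, ‖x‖ = 1 → ‖(⟪S x, x⟫_ℂ : ℂ)‖ ≤ M) : ‖S‖ ≤ M := by
  have hsym := hS.isSymmetric
  -- homogeneous bound on the quadratic form
  have h2 : ∀ x : H, ‖(⟪S x, x⟫_ℂ : ℂ)‖ ≤ M * ‖x‖ ^ 2 := by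
    intro x
    rcases eq_or_ne x 0 with rfl | hx
    · simp
    · have hnx : ‖x‖ ≠ 0 := norm_ne_zero_iff.mpr hx
      have hux : ‖(‖x‖⁻¹ • x : H)‖ = 1 := by
        rw [norm_smul, norm_inv, norm_norm, inv_mul_cancel₀ hnx]
      have hb := h _ hux
      have hS' : S (‖x‖⁻¹ • x) = ‖x‖⁻¹ • S x := S.map_smul_of_tower _ _
      rw [hS'] at hb
      have hv : (⟪(‖x‖⁻¹ : ℝ) • S x, (‖x‖⁻¹ : ℝ) • x⟫_ℂ : ℂ)
          = (((‖x‖⁻¹ * ‖x‖⁻¹ : ℝ)) : ℂ) * ⟪S x, x⟫_ℂ := by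
        rw [RCLike.real_smul_eq_coe_smul (K := ℂ), RCLike.real_smul_eq_coe_smul (K := ℂ),
          inner_smul_left, inner_smul_right, RCLike.conj_ofReal, ← mul_assoc,
          ← RCLike.ofReal_mul]
        rfl
      rw [hv, norm_mul, Complex.norm_real, Real.norm_eq_abs,
        abs_of_nonneg (by positivity : (0:ℝ) ≤ ‖x‖⁻¹ * ‖x‖⁻¹)] at hb
      have hx2 : (0:ℝ) < ‖x‖ := lt_of_le_of_ne (norm_nonneg x) (Ne.symm hnx)
      have hxx : ‖x‖⁻¹ * ‖x‖⁻¹ * ‖x‖ ^ 2 = 1 := by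
        rw [pow_two, mul_mul_mul_comm, inv_mul_cancel₀ hnx, one_mul]
      calc ‖(⟪S x, x⟫_ℂ : ℂ)‖
          = ((‖x‖⁻¹ * ‖x‖⁻¹) * ‖(⟪S x, x⟫_ℂ : ℂ)‖) * ‖x‖ ^ 2 := by
            rw [mul_comm (‖x‖⁻¹ * ‖x‖⁻¹) ‖(⟪S x, x⟫_ℂ : ℂ)‖, mul_assoc, hxx, mul_one]
        _ ≤ M * ‖x‖ ^ 2 := mul_le_mul_of_nonneg_right hb (sq_nonneg _)
  -- bound on real part of the bilinear form on the unit ball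
  have key : ∀ x y : H, ‖x‖ ≤ 1 → ‖y‖ ≤ 1 → Complex.re (⟪S x, y⟫_ℂ) ≤ M := by
    intro x y hx hy
    have e1 : (⟪S (x + y), x + y⟫_ℂ : ℂ) - ⟪S (x - y), x - y⟫_ℂ
        = 2 * ⟪S x, y⟫_ℂ + 2 * ⟪S y, x⟫_ℂ := by
      rw [map_add, map_sub]
      simp only [inner_add_left, inner_add_right, inner_sub_left, inner_sub_right]
      ring
    have e2 : (⟪S y, x⟫_ℂ : ℂ) = (starRingEnd ℂ) (⟪S x, y⟫_ℂ) := by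
      rw [hsym.apply_clm y x, inner_conj_symm]
    rw [e2] at e1
    have e3 : (4 : ℝ) * Complex.re (⟪S x, y⟫_ℂ)
        = Complex.re (⟪S (x + y), x + y⟫_ℂ) - Complex.re (⟪S (x - y), x - y⟫_ℂ) := by
      have hc := congrArg Complex.re e1
      rw [Complex.sub_re, Complex.add_re] at hc
      have r1 : (2 * ⟪S x, y⟫_ℂ).re = 2 * (⟪S x, y⟫_ℂ).re := by
        rw [Complex.mul_re]
        norm_num
      have r2 : (2 * (starRingEnd ℂ) (⟪S x, y⟫_ℂ)).re = 2 * (⟪S x, y⟫_ℂ).re := by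
        rw [Complex.mul_re, Complex.conj_re, Complex.conj_im]
        norm_num
      rw [r1, r2] at hc
      linarith
    have b1 : Complex.re (⟪S (x + y), x + y⟫_ℂ) ≤ M * ‖x + y‖ ^ 2 := by
      calc Complex.re (⟪S (x + y), x + y⟫_ℂ) ≤ ‖(⟪S (x + y), x + y⟫_ℂ : ℂ)‖ :=
            Complex.re_le_norm _
        _ ≤ M * ‖x + y‖ ^ 2 := h2 _
    have b2 : -(M * ‖x - y‖ ^ 2) ≤ Complex.re (⟪S (x - y), x - y⟫_ℂ) := by
      have hb := (Complex.abs_re_le_norm (⟪S (x - y), x - y⟫_ℂ)).trans (h2 (x - y))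
      have := neg_le_of_abs_le hb
      linarith
    have hpar : ‖x + y‖ ^ 2 + ‖x - y‖ ^ 2 = 2 * (‖x‖ ^ 2 + ‖y‖ ^ 2) := by
      have hp := parallelogram_law_with_norm ℂ x y
      nlinarith [hp]
    have hxy : ‖x‖ ^ 2 + ‖y‖ ^ 2 ≤ 2 := by
      have ha : ‖x‖ ^ 2 ≤ 1 := by nlinarith [norm_nonneg x]
      have hbb : ‖y‖ ^ 2 ≤ 1 := by nlinarith [norm_nonneg y]
      linarith
    nlinarith [b1, b2, hpar, hxy, hM, sq_nonneg ‖x - y‖]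
  -- conclude operator norm bound
  refine S.opNorm_le_bound hM fun x => ?_
  rcases eq_or_ne x 0 with rfl | hx
  · simp
  · have hnx : (0:ℝ) < ‖x‖ := norm_pos_iff.mpr hx
    set x' : H := ‖x‖⁻¹ • x with hx'def
    have hx' : ‖x'‖ = 1 := by
      rw [hx'def, norm_smul, norm_inv, norm_norm, inv_mul_cancel₀ hnx.ne']
    rcases eq_or_ne (S x') 0 with hSx' | hSx'
    · have : S x = ‖x‖ • S x' := by
        rw [hx'def, S.map_smul_of_tower, smul_smul, mul_inv_cancel₀ hnx.ne', one_smul]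
      rw [this, hSx', smul_zero, norm_zero]
      positivity
    · have hnSx' : (0:ℝ) < ‖S x'‖ := norm_pos_iff.mpr hSx'
      set y : H := ‖S x'‖⁻¹ • S x' with hydef
      have hy : ‖y‖ ≤ 1 := by
        rw [hydef, norm_smul, norm_inv, norm_norm, inv_mul_cancel₀ hnSx'.ne']
      have hre : Complex.re (⟪S x', y⟫_ℂ) = ‖S x'‖ := by
        rw [hydef, RCLike.real_smul_eq_coe_smul (K := ℂ), inner_smul_right,
          inner_self_eq_norm_sq_to_K (𝕜 := ℂ), ← RCLike.re_to_complex, ← RCLike.ofReal_pow,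
          ← RCLike.ofReal_mul, RCLike.ofReal_re, pow_two, ← mul_assoc,
          inv_mul_cancel₀ hnSx'.ne', one_mul]
      have hkey := key x' y (le_of_eq hx') hy
      rw [hre] at hkey
      have hSx : ‖S x‖ = ‖x‖ * ‖S x'‖ := by
        have hx'' : S x = ‖x‖ • S x' := by
          rw [hx'def, S.map_smul_of_tower, smul_smul, mul_inv_cancel₀ hnx.ne', one_smul]
        rw [hx'', norm_smul, norm_norm]
      rw [hSx]
      calc ‖x‖ * ‖S x'‖ ≤ ‖x‖ * M := by
            exact mul_le_mul_of_nonneg_left hkey (norm_nonneg x)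
        _ = M * ‖x‖ := mul_comm _ _

end Aux

theorem numRad_le_half_norm_add_numRad_aluthge {H : Type*} [NormedAddCommGroup H]
    [InnerProductSpace ℂ H] [CompleteSpace H] (X V : H →L[ℂ] H)
    (hV : X = V * CFC.sqrt (star X * X))
    (hV' : star V * X = CFC.sqrt (star X * X)) :
    numRad X ≤ (1 / 2) *
      (‖X‖ + numRad (CFC.sqrt (CFC.sqrt (star X * X)) * V *
        CFC.sqrt (CFC.sqrt (star X * X)))) := by
  set P : H →L[ℂ] H := CFC.sqrt (star X * X) with hPdef
  set Q : H →L[ℂ] H := CFC.sqrt P with hQdef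
  set Tt : H →L[ℂ] H := Q * V * Q with hTtdef
  have hXXnn : (0 : H →L[ℂ] H) ≤ star X * X := star_mul_self_nonneg X
  have hPnn : (0 : H →L[ℂ] H) ≤ P := CFC.sqrt_nonneg _
  have hQnn : (0 : H →L[ℂ] H) ≤ Q := CFC.sqrt_nonneg _
  have hPP : P * P = star X * X := CFC.sqrt_mul_sqrt_self _ hXXnn
  have hQQ : Q * Q = P := CFC.sqrt_mul_sqrt_self _ hPnn
  have hPsa : star P = P := (IsSelfAdjoint.of_nonneg hPnn).star_eq
  have hQsa : star Q = Q := (IsSelfAdjoint.of_nonneg hQnn).star_eq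
  -- the "partial isometry" identity : (star V * V) * Q = Q
  have heP : (star V * V) * P = P := by
    conv_lhs => rw [mul_assoc, ← hV]
    exact hV'
  have heQ : (star V * V) * Q = Q := by
    have hA : ((1 - star V * V) * Q) * star ((1 - star V * V) * Q) = 0 := by
      have hse : star (star V * V) = star V * V := by
        rw [star_mul, star_star]
      rw [star_mul, hQsa, star_sub, star_one, hse]
      calc (1 - star V * V) * Q * (Q * (1 - star V * V))
          = (1 - star V * V) * (Q * Q) * (1 - star V * V) := by noncomm_ring
        _ = ((1 - star V * V) * P) * (1 - star V * V) := by rw [hQQ, mul_assoc]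
        _ = 0 := by rw [sub_mul, one_mul, heP, sub_self, zero_mul]
    have hnorm : ‖(1 - star V * V) * Q‖ * ‖(1 - star V * V) * Q‖ = 0 := by
      rw [← CStarRing.norm_self_mul_star, hA, norm_zero]
    have h0 : (1 - star V * V) * Q = 0 := norm_eq_zero.mp (mul_self_eq_zero.mp hnorm)
    rw [sub_mul, one_mul] at h0
    exact (sub_eq_zero.mp h0).symm
  have hQadj : ContinuousLinearMap.adjoint Q = Q := by
    rw [← ContinuousLinearMap.star_eq_adjoint, hQsa]
  have hVadj : ContinuousLinearMap.adjoint V = star V :=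
    (ContinuousLinearMap.star_eq_adjoint V).symm
  have hW0 : 0 ≤ numRad Tt := numRad_nonneg _
  have hPX : ‖P‖ = ‖X‖ := by
    have h1 : ‖P‖ * ‖P‖ = ‖X‖ * ‖X‖ := by
      calc ‖P‖ * ‖P‖ = ‖star P * P‖ := CStarRing.norm_star_mul_self.symm
        _ = ‖P * P‖ := by rw [hPsa]
        _ = ‖star X * X‖ := by rw [hPP]
        _ = ‖X‖ * ‖X‖ := CStarRing.norm_star_mul_self
    rw [← Real.sqrt_mul_self (norm_nonneg P), h1, Real.sqrt_mul_self (norm_nonneg X)]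
  -- pointwise facts for any unit vector y
  have hQnorm : ∀ y : H, ‖y‖ = 1 → ‖Q y‖ ^ 2 ≤ ‖X‖ := by
    intro y hy
    have h1 : (⟪Q y, Q y⟫_ℂ : ℂ) = ⟪P y, y⟫_ℂ := by
      have h2 : (⟪Q y, Q y⟫_ℂ : ℂ) = ⟪Q (Q y), y⟫_ℂ := by
        have h2' := ContinuousLinearMap.adjoint_inner_left Q y (Q y)
        rw [hQadj] at h2'
        exact h2'.symm
      have h3 : Q (Q y) = P y := by
        rw [← ContinuousLinearMap.mul_apply, hQQ]
      rw [h2, h3]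
    have h4 : ‖Q y‖ ^ 2 = Complex.re (⟪Q y, Q y⟫_ℂ) := (inner_self_eq_norm_sq (𝕜 := ℂ) _).symm
    calc ‖Q y‖ ^ 2 = Complex.re (⟪P y, y⟫_ℂ) := by rw [h4, h1]
      _ ≤ ‖(⟪P y, y⟫_ℂ : ℂ)‖ := Complex.re_le_norm _
      _ ≤ ‖P y‖ * ‖y‖ := norm_inner_le_norm _ _
      _ ≤ (‖P‖ * ‖y‖) * ‖y‖ := by gcongr; exact P.le_opNorm y
      _ = ‖P‖ := by rw [hy]; ring
      _ = ‖X‖ := hPX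
  have hVQnorm : ∀ y : H, ‖V (Q y)‖ ^ 2 = ‖Q y‖ ^ 2 := by
    intro y
    have h1 : (⟪V (Q y), V (Q y)⟫_ℂ : ℂ) = ⟪Q y, Q y⟫_ℂ := by
      have h2 : (⟪Q y, (ContinuousLinearMap.adjoint V) (V (Q y))⟫_ℂ : ℂ)
          = ⟪V (Q y), V (Q y)⟫_ℂ := ContinuousLinearMap.adjoint_inner_right V (Q y) (V (Q y))
      have h3 : (ContinuousLinearMap.adjoint V) (V (Q y)) = Q y := by
        rw [hVadj]
        calc (star V) (V (Q y)) = ((star V * V) * Q) y := rfl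
          _ = Q y := by rw [heQ]
      rw [← h2, h3]
    have h4 : ‖V (Q y)‖ ^ 2 = Complex.re (⟪V (Q y), V (Q y)⟫_ℂ) :=
      (inner_self_eq_norm_sq (𝕜 := ℂ) _).symm
    rw [h4, h1]
    exact inner_self_eq_norm_sq (𝕜 := ℂ) (Q y)
  have hTty : ∀ y : H, (⟪V (Q y), Q y⟫_ℂ : ℂ) = ⟪Tt y, y⟫_ℂ := by
    intro y
    have h1 : Tt y = Q (V (Q y)) := rfl
    have h2 := ContinuousLinearMap.adjoint_inner_left Q y (V (Q y))
    rw [hQadj] at h2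
    rw [h1, ← h2]
  -- main estimate
  have hmain : ∀ z : {z : H // ‖z‖ = 1}, ‖(⟪X z.1, z.1⟫_ℂ : ℂ)‖
      ≤ 1 / 2 * (‖X‖ + numRad Tt) := by
    rintro ⟨x, hx⟩
    dsimp only
    set c : ℂ := ⟪X x, x⟫_ℂ with hc
    have hc1 : c = ⟪Q x, Q ((star V) x)⟫_ℂ := by
      calc c = ⟪V (Q (Q x)), x⟫_ℂ := by rw [hc, hV, ← hQQ]; rfl
        _ = ⟪Q (Q x), (ContinuousLinearMap.adjoint V) x⟫_ℂ :=
            (ContinuousLinearMap.adjoint_inner_right V (Q (Q x)) x).symm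
        _ = ⟪Q x, Q ((ContinuousLinearMap.adjoint V) x)⟫_ℂ := by
            have h2 := ContinuousLinearMap.adjoint_inner_left Q
              ((ContinuousLinearMap.adjoint V) x) (Q x)
            rw [hQadj] at h2
            exact h2
        _ = ⟪Q x, Q ((star V) x)⟫_ℂ := by rw [hVadj]
    have hcs : ‖c‖ ≤ ‖Q x‖ * ‖Q ((star V) x)‖ := by
      rw [hc1]; exact norm_inner_le_norm _ _
    by_cases hc0 : c = 0
    · rw [hc0, norm_zero]
      nlinarith [norm_nonneg X, hW0]
    · set U : ℂ := (‖c‖ : ℂ) / c with hUdef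
      have hU : ‖U‖ = 1 := by
        rw [hUdef, norm_div, Complex.norm_real, norm_norm,
          div_self (norm_ne_zero_iff.mpr hc0)]
      have hUc : U * c = (‖c‖ : ℂ) := by
        rw [hUdef]
        field_simp
      set u : H := Q x + U • Q ((star V) x) with hudef
      have hip : (⟪Q x, U • Q ((star V) x)⟫_ℂ : ℂ) = (‖c‖ : ℂ) := by
        rw [inner_smul_right, ← hc1, hUc]
      have hnormu : ‖u‖ ^ 2 = ‖Q x‖ ^ 2 + 2 * ‖c‖ + ‖Q ((star V) x)‖ ^ 2 := by
        rw [hudef, norm_add_sq (𝕜 := ℂ), hip, norm_smul, hU, one_mul]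
        simp only [RCLike.re_to_complex, Complex.ofReal_re]
      have h4c : 4 * ‖c‖ ≤ ‖u‖ ^ 2 := by
        nlinarith [hcs, sq_nonneg (‖Q x‖ - ‖Q ((star V) x)‖)]
      set D : H →L[ℂ] H := (1 + (starRingEnd ℂ) U • V) * Q with hDdef
      have hDstar : star D = Q * (1 + U • star V) := by
        rw [hDdef, star_mul, star_add, star_one, star_smul, hQsa]
        simp [Complex.star_def]
      have hu_eq : u = (star D) x := by
        rw [hDstar, hudef]
        have h1 : (Q * (1 + U • star V)) x = Q (x + U • (star V) x) := rfl
        rw [h1, map_add, map_smul]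
      have hub : ‖u‖ ≤ ‖D‖ := by
        rw [hu_eq]
        calc ‖(star D) x‖ ≤ ‖star D‖ * ‖x‖ := (star D).le_opNorm x
          _ = ‖D‖ := by rw [hx, mul_one, norm_star]
      -- pointwise bound on ‖D y‖² for unit y
      have hDy : ∀ y : H, ‖y‖ = 1 → ‖D y‖ ^ 2 ≤ 2 * ‖X‖ + 2 * numRad Tt := by
        intro y hy
        have hDyeq : D y = Q y + (starRingEnd ℂ) U • V (Q y) := by
          rw [hDdef]
          rfl
        have ht : ‖(⟪Tt y, y⟫_ℂ : ℂ)‖ ≤ numRad Tt := inner_le_numRad Tt hy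
        have hmid : (⟪Q y, (starRingEnd ℂ) U • V (Q y)⟫_ℂ : ℂ)
            = (starRingEnd ℂ) U * (starRingEnd ℂ) (⟪Tt y, y⟫_ℂ) := by
          rw [inner_smul_right, ← hTty y, inner_conj_symm]
        have hmid2 : Complex.re ((⟪Q y, (starRingEnd ℂ) U • V (Q y)⟫_ℂ : ℂ)) ≤ numRad Tt := by
          rw [hmid]
          calc Complex.re ((starRingEnd ℂ) U * (starRingEnd ℂ) (⟪Tt y, y⟫_ℂ))
              ≤ ‖(starRingEnd ℂ) U * (starRingEnd ℂ) (⟪Tt y, y⟫_ℂ)‖ := Complex.re_le_norm _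
            _ = ‖(⟪Tt y, y⟫_ℂ : ℂ)‖ := by
                rw [norm_mul, RCLike.norm_conj, RCLike.norm_conj, hU, one_mul]
            _ ≤ numRad Tt := ht
        have hsm : ‖(starRingEnd ℂ) U • V (Q y)‖ = ‖V (Q y)‖ := by
          rw [norm_smul, RCLike.norm_conj, hU, one_mul]
        calc ‖D y‖ ^ 2 = ‖Q y‖ ^ 2
              + 2 * Complex.re ((⟪Q y, (starRingEnd ℂ) U • V (Q y)⟫_ℂ : ℂ))
              + ‖(starRingEnd ℂ) U • V (Q y)‖ ^ 2 := by
              rw [hDyeq, norm_add_sq (𝕜 := ℂ)]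
              rfl
          _ = ‖Q y‖ ^ 2 + 2 * Complex.re ((⟪Q y, (starRingEnd ℂ) U • V (Q y)⟫_ℂ : ℂ))
              + ‖Q y‖ ^ 2 := by rw [hsm, hVQnorm y]
          _ ≤ ‖X‖ + 2 * numRad Tt + ‖X‖ := by
              have := hQnorm y hy
              linarith [hmid2, this]
          _ = 2 * ‖X‖ + 2 * numRad Tt := by ring
      -- operator norm bound via the self-adjoint operator star D * D
      have hsa : IsSelfAdjoint (star D * D) := by
        rw [IsSelfAdjoint, star_mul, star_star]
      have hM : (0:ℝ) ≤ 2 * ‖X‖ + 2 * numRad Tt := by positivity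
      have hDD : ‖star D * D‖ ≤ 2 * ‖X‖ + 2 * numRad Tt := by
        refine selfadj_norm_le hsa hM fun y hy => ?_
        have h1 : (⟪(star D * D) y, y⟫_ℂ : ℂ) = ⟪D y, D y⟫_ℂ := by
          have h2 : (star D * D) y = (ContinuousLinearMap.adjoint D) (D y) := by
            rw [ContinuousLinearMap.star_eq_adjoint]
            rfl
          rw [h2]
          exact ContinuousLinearMap.adjoint_inner_left D y (D y)
        rw [h1, inner_self_eq_norm_sq_to_K (𝕜 := ℂ)]
        rw [← RCLike.ofReal_pow]
        rw [RCLike.norm_ofReal, abs_of_nonneg (sq_nonneg _)]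
        exact hDy y hy
      have hD2 : ‖D‖ ^ 2 ≤ 2 * ‖X‖ + 2 * numRad Tt := by
        have := CStarRing.norm_star_mul_self (x := D)
        nlinarith [this, hDD]
      have hu2 : ‖u‖ ^ 2 ≤ 2 * ‖X‖ + 2 * numRad Tt := by
        nlinarith [hub, norm_nonneg u, norm_nonneg D, hD2]
      linarith [h4c, hu2]
  refine Real.iSup_le hmain ?_
  nlinarith [norm_nonneg X, hW0]
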